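/- From singular to stopwatch, backward simulation: Let G_S be an initialized singular game and let G_W be the stopwatch game obtained from G_S by the flow-normalization construction. Then the inverse map γ1⁻¹ : Q(G_W) → Q(G_S), γ1⁻¹(l,v*) = (l,v) where v(x) = v*(x)·flow(l,x) if flow(l,x) ≠ 0 and v(x) = v*(x) otherwise, is an alternating simulation witnessing T(G_W) ≼ T(G_S). -/

import Mathlib

/-!
Turn-based game structures, alternating simulation, and related notions,
following Dima, Hammami, Oualhadj, Laleau,
"Deciding the synthesis problem for hybrid games through bisimulation".
-/

/-- A turn-based game structure over a set of observations `Obs`: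
configurations (partitioned between Player 1 and Player 2 via `isP1`),
an initial Player-1 configuration, moves, a transition relation
(`trans p m p'` holds when the -- partial, possibly nondeterministic --
 transition function is defined on `(p, m)` with value `p'`),
and a labeling of configurations by observations. -/
structure TBGame (Obs : Type) where
  /-- configurations -/
  Conf : Type
  /-- moves -/
  Mv : Type
  /-- the configurations owned by Player 1 (the others belong to Player 2) -/
  isP1 : Conf → Prop
  /-- initial configuration -/
  init : Conf
  /-- the initial configuration belongs to Player 1 -/
  init_p1 : isP1 init
  /-- the transitions -/
  trans : Conf → Mv → Conf → Prop
  /-- labeling of configurations with observations -/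
  lbl : Conf → Obs

/-- `R` is an alternating simulation between `G1` and `G2`:
it relates only same-player configurations, preserves labels,
every Player-1 transition of `G1` from `p` is matched by some transition
of `G2` from `q` staying in `R`, and every Player-2 transition of `G2`
from `q` is matched by some transition of `G1` from `p` staying in `R`. -/
def IsAltSim {Obs : Type} (G1 G2 : TBGame Obs) (R : G1.Conf → G2.Conf → Prop) : Prop :=
  (∀ p q, R p q → G1.lbl p = G2.lbl q) ∧
  (∀ p q, R p q → (G1.isP1 p ↔ G2.isP1 q)) ∧
  (∀ p q, R p q → G1.isP1 p →
      ∀ m p', G1.trans p m p' → ∃ m' q', G2.trans q m' q' ∧ R p' q') ∧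
  (∀ p q, R p q → ¬ G1.isP1 p →
      ∀ m' q', G2.trans q m' q' → ∃ m p', G1.trans p m p' ∧ R p' q')

/-- `R` witnesses `T(G1) ≼ T(G2)` : `R` is an alternating simulation
containing the pair of initial configurations. -/
def Simulates {Obs : Type} (G1 G2 : TBGame Obs) (R : G1.Conf → G2.Conf → Prop) : Prop :=
  IsAltSim G1 G2 R ∧ R G1.init G2.init

/-- The data of an edge of a hybrid game: source and target locations, an action,
a simple compact constraint assigning to each variable `x` the compact rational
interval `[lo x, hi x]`, and a reset function `rst : X → ℚ ∪ {⊥}`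
(`none` meaning `⊥`, i.e. no reset). -/
structure EdgeData (L X Act : Type) where
  src : L
  act : Act
  lo : X → ℚ
  hi : X → ℚ
  rst : X → Option ℚ
  tgt : L

/-- An initialized singular game (ISR game): locations partitioned between the
two players, an initial Player-1 location, rational flows (slopes) for each
variable in each location, observations labeling the locations, and a set of
edges, subject to the initialization condition: any variable whose flow changes
across an edge is reset on that edge. -/
structure ISRGame (L X Act Obs : Type) where
  /-- the locations owned by Player 1 (the others belong to Player 2) -/
  isL1 : L → Prop
  /-- initial location -/
  l0 : L
  l0_p1 : isL1 l0
  /-- labeling of locations with observations -/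
  lbl : L → Obs
  /-- the slope of each variable in each location -/
  flow : L → X → ℚ
  /-- the edges -/
  E : Set (EdgeData L X Act)
  /-- initialization: whenever the flow of `x` differs between the two endpoints
  of an edge, `x` is reset on that edge -/
  initialized : ∀ e ∈ E, ∀ x, flow e.src x ≠ flow e.tgt x → e.rst x ≠ none

/-- The semantics `T(G)` of an ISR game `G` as a turn-based game structure:
configurations are pairs (location, valuation of the variables in `ℝ`),
the initial configuration is `(l0, 0)`, moves are pairs (action, nonnegative
delay), and `(l,v) →⁽ᵃ'ᵗ⁾ (l',v')` whenever some edge `e = (l,a,φ_e,rst_e,l')`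
satisfies `v x + t · flow l x ∈ φ_e x` for all `x`, `v' x = rst_e x` when
`rst_e x ≠ ⊥`, and `v' x = v x + t · flow l x` otherwise. -/
def ISRGame.semantics {L X Act Obs : Type} (G : ISRGame L X Act Obs) : TBGame Obs where
  Conf := L × (X → ℝ)
  Mv := Act × NNReal
  isP1 := fun c => G.isL1 c.1
  init := (G.l0, fun _ => 0)
  init_p1 := G.l0_p1
  lbl := fun c => G.lbl c.1
  trans := fun c m c' =>
    ∃ e ∈ G.E, e.src = c.1 ∧ e.act = m.1 ∧ e.tgt = c'.1 ∧
      (∀ x, (e.lo x : ℝ) ≤ c.2 x + (m.2 : ℝ) * (G.flow c.1 x : ℝ) ∧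
            c.2 x + (m.2 : ℝ) * (G.flow c.1 x : ℝ) ≤ (e.hi x : ℝ)) ∧
      (∀ x, c'.2 x =
        (e.rst x).elim (c.2 x + (m.2 : ℝ) * (G.flow c.1 x : ℝ)) (fun r => (r : ℝ)))

/-- The transformation of an edge of an initialized singular game into an edge
of the associated stopwatch game: the constraint of each variable is divided
by the flow of the variable in the source location (when nonzero; the division
of a compact interval by a negative rational swaps its endpoints), and the reset
value of each reset variable is divided by the flow of the variable in the
target location (when nonzero). -/
def stopwatchEdge {L X Act Obs : Type} (G : ISRGame L X Act Obs)
    (e : EdgeData L X Act) : EdgeData L X Act where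
  src := e.src
  act := e.act
  lo := fun x =>
    if G.flow e.src x = 0 then e.lo x
    else if 0 < G.flow e.src x then e.lo x / G.flow e.src x
    else e.hi x / G.flow e.src x
  hi := fun x =>
    if G.flow e.src x = 0 then e.hi x
    else if 0 < G.flow e.src x then e.hi x / G.flow e.src x
    else e.lo x / G.flow e.src x
  rst := fun x =>
    (e.rst x).map (fun c => if G.flow e.tgt x = 0 then c else c / G.flow e.tgt x)
  tgt := e.tgt

/-- The initialized stopwatch game `G_W` obtained from an initialized singular
game `G_S` by flow normalization: the flow of each variable becomes `0` if it
was `0` and `1` otherwise, and constraints and resets are rescaled accordingly. -/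
def stopwatchOf {L X Act Obs : Type} (G : ISRGame L X Act Obs) : ISRGame L X Act Obs where
  isL1 := G.isL1
  l0 := G.l0
  l0_p1 := G.l0_p1
  lbl := G.lbl
  flow := fun l x => if G.flow l x = 0 then 0 else 1
  E := stopwatchEdge G '' G.E
  initialized := by
    rintro e ⟨e0, he0, rfl⟩ x hx
    have hne : G.flow e0.src x ≠ G.flow e0.tgt x := by
      intro h
      exact hx (congrArg (fun q : ℚ => if q = 0 then (0 : ℚ) else 1) h)
    have h0 := G.initialized e0 he0 x hne
    simp only [stopwatchEdge]
    cases hr : e0.rst x with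
    | none => exact absurd hr h0
    | some c => simp [hr]

/-- `stopwatchOf G` is indeed a stopwatch game : all flows are `0` or `1`. -/
theorem stopwatchOf_flow {L X Act Obs : Type} (G : ISRGame L X Act Obs) (l : L) (x : X) :
    (stopwatchOf G).flow l x = 0 ∨ (stopwatchOf G).flow l x = 1 := by
  by_cases h : G.flow l x = 0 <;> simp [stopwatchOf, h]

/-- The transformed valuation `v*` : `v* x = v x / flow l x` when `flow l x ≠ 0`,
and `v* x = v x` otherwise. -/
noncomputable def vstar {L X : Type} (flow : L → X → ℚ) (l : L) (v : X → ℝ) : X → ℝ :=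
  fun x => if flow l x = 0 then v x else v x / (flow l x : ℝ)

/-- The relation (graph of the map) `γ1 (l,v) = (l, v*)` between configurations
of `T(G_S)` and configurations of `T(G_W)`. -/
def gamma1 {L X Act Obs : Type} (G : ISRGame L X Act Obs) :
    (ISRGame.semantics G).Conf → (ISRGame.semantics (stopwatchOf G)).Conf → Prop :=
  fun p q => q.1 = p.1 ∧ q.2 = vstar G.flow p.1 p.2

/-- The inverse map `γ1⁻¹ (l, v*) = (l, v)`, where `v x = v* x · flow l x` if
`flow l x ≠ 0` and `v x = v* x` otherwise, as a relation between configurations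
of `T(G_W)` and configurations of `T(G_S)`. -/
def gamma1inv {L X Act Obs : Type} (G : ISRGame L X Act Obs) :
    (ISRGame.semantics (stopwatchOf G)).Conf → (ISRGame.semantics G).Conf → Prop :=
  fun q p => p.1 = q.1 ∧
    p.2 = fun x => if G.flow q.1 x = 0 then q.2 x else q.2 x * (G.flow q.1 x : ℝ)

/-- **From singular to stopwatch, backward simulation.** For every initialized
singular game `G_S` with associated stopwatch game `G_W`, the inverse map
`γ1⁻¹ (l, v*) = (l, v)`, where `v x = v* x · flow l x` if `flow l x ≠ 0` and
`v x = v* x` otherwise, is an alternating simulation witnessing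
`T(G_W) ≼ T(G_S)`. -/
theorem singular_to_stopwatch_backward {L X Act Obs : Type}
    [Fintype L] [Fintype X] [Fintype Act] [Fintype Obs]
    (G : ISRGame L X Act Obs) (hE : G.E.Finite) :
    Simulates (ISRGame.semantics (stopwatchOf G)) (ISRGame.semantics G) (gamma1inv G) := by
  constructor
  · refine ⟨?_, ?_, ?_, ?_⟩
    · rintro ⟨l, w⟩ ⟨l', v⟩ ⟨h, hv⟩
      subst h; rfl
    · rintro ⟨l, w⟩ ⟨l', v⟩ ⟨h, hv⟩
      subst h; rfl
    · -- Player 1: W transitions matched by S transitions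
      rintro ⟨l, w⟩ ⟨l', v⟩ ⟨h, hv⟩ _ ⟨a, t⟩ ⟨l2, w'⟩ htr
      dsimp only at h; subst h; dsimp only at hv; subst hv
      obtain ⟨eW, ⟨e, he, rfl⟩, hsrc, hact, htgt, hguard, hrst⟩ := htr
      simp only [stopwatchEdge] at hsrc hact htgt
      subst hsrc; subst htgt
      refine ⟨(a, t), (e.tgt,
        fun x => if G.flow e.tgt x = 0 then w' x else w' x * (G.flow e.tgt x : ℝ)),
        ⟨e, he, rfl, hact, rfl, ?_, ?_⟩, rfl, rfl⟩
      · intro x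
        have hg := hguard x
        by_cases hf : G.flow e.src x = 0
        · simp only [stopwatchEdge, stopwatchOf, hf, ite_true] at hg ⊢
          simpa [hf] using hg
        · rcases lt_or_gt_of_ne hf with hn | hp
          · have hnR : (G.flow e.src x : ℝ) < 0 := by exact_mod_cast hn
            simp [stopwatchEdge, stopwatchOf, hf, not_lt.mpr hn.le] at hg ⊢
            push_cast at hg
            obtain ⟨hg1, hg2⟩ := hg
            rw [div_le_iff_of_neg hnR] at hg1
            rw [le_div_iff_of_neg hnR] at hg2
            constructor <;> nlinarith
          · have hpR : (0:ℝ) < (G.flow e.src x : ℝ) := by exact_mod_cast hp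
            simp [stopwatchEdge, stopwatchOf, hf, hp] at hg ⊢
            push_cast at hg
            obtain ⟨hg1, hg2⟩ := hg
            rw [div_le_iff₀ hpR] at hg1
            rw [le_div_iff₀ hpR] at hg2
            constructor <;> nlinarith
      · intro x
        have hr := hrst x
        cases hrx : e.rst x with
        | some r =>
          simp only [stopwatchEdge, stopwatchOf, hrx, Option.map_some, Option.elim] at hr ⊢
          by_cases hf2 : G.flow e.tgt x = 0
          · simp only [hf2, ite_true] at hr ⊢; exact hr
          · have hf2R : (G.flow e.tgt x : ℝ) ≠ 0 := by exact_mod_cast hf2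
            simp only [hf2, ite_false] at hr ⊢
            rw [hr]
            push_cast
            field_simp
        | none =>
          have hfe : G.flow e.src x = G.flow e.tgt x := by
            by_contra hc; exact G.initialized e he x hc hrx
          simp only [stopwatchEdge, stopwatchOf, hrx, Option.map_none, Option.elim] at hr ⊢
          by_cases hf : G.flow e.src x = 0
          · have hf2 : G.flow e.tgt x = 0 := hfe ▸ hf
            simp [hf, hf2] at hr ⊢
            simp [hr]
          · have hf2 : G.flow e.tgt x ≠ 0 := hfe ▸ hf
            simp only [hf, hf2, ite_false] at hr ⊢
            rw [hr, ← hfe]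
            simp [hf]
            ring
    · -- Player 2: S transitions matched by W transitions
      rintro ⟨l, w⟩ ⟨l', v⟩ ⟨h, hv⟩ _ ⟨a, t⟩ ⟨l2, v'⟩ htr
      dsimp only at h; subst h; dsimp only at hv; subst hv
      obtain ⟨e, he, hsrc, hact, htgt, hguard, hrst⟩ := htr
      dsimp only at hsrc hact htgt hguard hrst
      subst hsrc; subst htgt
      refine ⟨(a, t), (e.tgt,
        fun x => if G.flow e.tgt x = 0 then v' x else v' x / (G.flow e.tgt x : ℝ)),
        ⟨stopwatchEdge G e, ⟨e, he, rfl⟩, rfl, hact, rfl, ?_, ?_⟩, rfl, ?_⟩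
      · intro x
        have hg := hguard x
        by_cases hf : G.flow e.src x = 0
        · simp only [stopwatchEdge, stopwatchOf, hf, ite_true] at hg ⊢
          simpa [hf] using hg
        · rcases lt_or_gt_of_ne hf with hn | hp
          · have hnR : (G.flow e.src x : ℝ) < 0 := by exact_mod_cast hn
            simp [hf, not_lt.mpr hn.le] at hg
            simp [stopwatchEdge, stopwatchOf, hf, not_lt.mpr hn.le]
            push_cast
            rw [div_le_iff_of_neg hnR, le_div_iff_of_neg hnR]
            obtain ⟨hg1, hg2⟩ := hg
            constructor <;> nlinarith
          · have hpR : (0:ℝ) < (G.flow e.src x : ℝ) := by exact_mod_cast hp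
            simp [hf] at hg
            simp [stopwatchEdge, stopwatchOf, hf, hp]
            push_cast
            rw [div_le_iff₀ hpR, le_div_iff₀ hpR]
            obtain ⟨hg1, hg2⟩ := hg
            constructor <;> nlinarith
      · intro x
        have hr := hrst x
        cases hrx : e.rst x with
        | some r =>
          simp only [hrx, Option.elim] at hr
          simp only [stopwatchEdge, stopwatchOf, hrx, Option.map_some, Option.elim]
          by_cases hf2 : G.flow e.tgt x = 0
          · simp [hf2, hr]
          · have hf2R : (G.flow e.tgt x : ℝ) ≠ 0 := by exact_mod_cast hf2
            simp only [hf2, ite_false]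
            rw [hr]
            push_cast
            ring
        | none =>
          have hfe : G.flow e.src x = G.flow e.tgt x := by
            by_contra hc; exact G.initialized e he x hc hrx
          simp only [hrx, Option.elim] at hr
          simp only [stopwatchEdge, stopwatchOf, hrx, Option.map_none, Option.elim]
          by_cases hf : G.flow e.src x = 0
          · have hf2 : G.flow e.tgt x = 0 := hfe ▸ hf
            simp [hf] at hr
            simp [hf, hf2, hr]
          · have hf2 : G.flow e.tgt x ≠ 0 := hfe ▸ hf
            have hfR : (G.flow e.src x : ℝ) ≠ 0 := by exact_mod_cast hf
            simp only [hf, ite_false] at hr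
            simp only [hf2, ite_false, if_neg hf]
            rw [hr, ← hfe]
            push_cast
            field_simp
      · funext x
        by_cases hf2 : G.flow e.tgt x = 0
        · simp [hf2]
        · have hf2R : (G.flow e.tgt x : ℝ) ≠ 0 := by exact_mod_cast hf2
          simp [hf2, div_mul_cancel₀ _ hf2R]
  · exact ⟨rfl, by funext x; simp [ISRGame.semantics, stopwatchOf]⟩
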